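/- Let d : Fin n → ℝ be antitone with values in [0,1], let t ∈ (0,1), let s := Σ_i d(i), and let x := Σ_i max(d(i) − t, 0). Let C : ℝ → ℝ be a concave function with C(0) ≥ 0. Then Σ_i d(i)·p(i) ≤ (1−t)·C(x/(1−t)) + t·C((s−x)/t) for any antitone p : Fin n → ℝ with partial sums bounded by C, i.e. Σ_{j<i} p(j) ≤ C(i) for all i. -/

import Mathlib

open Finset

private lemma abel_sum (f g : ℕ → ℝ) (n : ℕ) :
    ∑ i ∈ range n, (f i - f (i+1)) * (∑ j ∈ range (i+1), g j)
      = ∑ i ∈ range n, f i * g i - f n * ∑ j ∈ range n, g j := by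
  induction n with
  | zero => simp
  | succ m ih =>
    rw [sum_range_succ, ih, sum_range_succ (fun i => f i * g i),
      sum_range_succ g]
    ring

private lemma tele_sum (E : ℕ → ℝ) (n : ℕ) :
    ∑ i ∈ range n, (E i - E (i+1)) * ((i : ℝ) + 1)
      = (∑ i ∈ range n, E i) - E n * n := by
  induction n with
  | zero => simp
  | succ m ih =>
    rw [sum_range_succ, ih, sum_range_succ E]
    push_cast
    ring

private lemma jensen_step (n : ℕ) (E : ℕ → ℝ) (hstep : ∀ i, E (i+1) ≤ E i)
    (hEn : E n = 0) (r : ℝ) (hr : 0 < r) (hEr : E 0 ≤ r)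
    (C : ℝ → ℝ) (hC : ConcaveOn ℝ Set.univ C) (hC0 : 0 ≤ C 0) :
    ∑ i ∈ range n, (E i - E (i+1)) * C ((i : ℝ) + 1)
      ≤ r * C ((∑ i ∈ range n, E i) / r) := by
  set w : ℕ → ℝ := fun i => if i < n then (E i - E (i+1)) / r else (r - E 0) / r with hw
  set z : ℕ → ℝ := fun i => if i < n then (i : ℝ) + 1 else 0 with hz
  have hw0 : ∀ i ∈ range (n+1), 0 ≤ w i := by
    intro i _
    simp only [hw]
    split
    · exact div_nonneg (by linarith [hstep i]) hr.le
    · exact div_nonneg (by linarith) hr.le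
  have htele : ∑ i ∈ range n, (E i - E (i+1)) = E 0 - E n := sum_range_sub' E n
  have hw1 : ∑ i ∈ range (n+1), w i = 1 := by
    rw [sum_range_succ]
    have h1 : ∑ i ∈ range n, w i = ∑ i ∈ range n, (E i - E (i+1)) / r := by
      refine sum_congr rfl fun i hi => ?_
      simp [hw, mem_range.mp hi]
    rw [h1, ← sum_div, htele, hEn]
    simp only [hw, lt_irrefl n, if_false]
    field_simp
    ring
  have key := hC.le_map_sum hw0 hw1 (fun i _ => Set.mem_univ (z i))
  have hz_sum : ∑ i ∈ range (n+1), w i • z i = (∑ i ∈ range n, E i) / r := by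
    rw [sum_range_succ]
    have h1 : ∑ i ∈ range n, w i • z i
        = (∑ i ∈ range n, (E i - E (i+1)) * ((i : ℝ) + 1)) / r := by
      rw [sum_div]
      refine sum_congr rfl fun i hi => ?_
      simp only [hw, hz, mem_range.mp hi, if_true, smul_eq_mul]
      ring
    rw [h1, tele_sum, hEn]
    simp only [hw, hz, lt_irrefl n, if_false, smul_eq_mul]
    ring
  have hCsum : ∑ i ∈ range (n+1), w i • C (z i)
      = (∑ i ∈ range n, (E i - E (i+1)) * C ((i : ℝ) + 1)) / r + (r - E 0) / r * C 0 := by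
    rw [sum_range_succ]
    have h1 : ∑ i ∈ range n, w i • C (z i)
        = (∑ i ∈ range n, (E i - E (i+1)) * C ((i : ℝ) + 1)) / r := by
      rw [sum_div]
      refine sum_congr rfl fun i hi => ?_
      simp only [hw, hz, mem_range.mp hi, if_true, smul_eq_mul]
      ring
    rw [h1]
    simp only [hw, hz, lt_irrefl n, if_false, smul_eq_mul]
  rw [hz_sum, hCsum] at key
  have hextra : 0 ≤ (r - E 0) / r * C 0 :=
    mul_nonneg (div_nonneg (by linarith) hr.le) hC0
  have hmain : (∑ i ∈ range n, (E i - E (i+1)) * C ((i : ℝ) + 1)) / r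
      ≤ C ((∑ i ∈ range n, E i) / r) := by linarith
  calc ∑ i ∈ range n, (E i - E (i+1)) * C ((i : ℝ) + 1)
      = r * ((∑ i ∈ range n, (E i - E (i+1)) * C ((i : ℝ) + 1)) / r) := by
        field_simp
    _ ≤ r * C ((∑ i ∈ range n, E i) / r) :=
        mul_le_mul_of_nonneg_left hmain hr.le

theorem drop_by_upper_area (n : ℕ) (d p : Fin n → ℝ) (hd : Antitone d)
    (h01 : ∀ i, d i ∈ Set.Icc (0 : ℝ) 1)
    (t : ℝ) (ht0 : 0 < t) (ht1 : t < 1)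
    (C : ℝ → ℝ) (hC : ConcaveOn ℝ Set.univ C) (hC0 : 0 ≤ C 0)
    (hp : Antitone p)
    (hpC : ∀ i : Fin n, ∑ j ∈ univ.filter (fun j : Fin n => j ≤ i), p j ≤ C ((i : ℕ) + 1)) :
    ∑ i, d i * p i ≤
      (1 - t) * C ((∑ i, max (d i - t) 0) / (1 - t)) +
        t * C (((∑ i, d i) - ∑ i, max (d i - t) 0) / t) := by
  classical
  set D : ℕ → ℝ := fun i => if h : i < n then d ⟨i, h⟩ else 0 with hD
  set q : ℕ → ℝ := fun i => if h : i < n then p ⟨i, h⟩ else 0 with hq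
  have hD01 : ∀ i, 0 ≤ D i ∧ D i ≤ 1 := by
    intro i
    simp only [hD]
    split
    · exact ⟨(h01 _).1, (h01 _).2⟩
    · exact ⟨le_refl 0, zero_le_one⟩
  have hDstep : ∀ i, D (i+1) ≤ D i := by
    intro i
    by_cases h : i + 1 < n
    · have h' : i < n := by omega
      simp only [hD, dif_pos h, dif_pos h']
      exact hd (by simp [Fin.le_def])
    · simp only [hD, dif_neg h]
      split
      · exact (h01 _).1
      · exact le_refl 0
  have hDn : D n = 0 := by simp [hD]
  set E : ℕ → ℝ := fun i => max (D i - t) 0 with hE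
  set F : ℕ → ℝ := fun i => min (D i) t with hF
  have hEF : ∀ i, E i + F i = D i := by
    intro i
    rcases le_total (D i) t with h | h
    · simp [hE, hF, max_eq_right (by linarith : D i - t ≤ 0), min_eq_left h]
    · have hEi : E i = D i - t := max_eq_left (by linarith)
      have hFi : F i = t := min_eq_right h
      rw [hEi, hFi]; ring
  have hEstep : ∀ i, E (i+1) ≤ E i := fun i =>
    max_le_max (by linarith [hDstep i]) le_rfl
  have hFstep : ∀ i, F (i+1) ≤ F i := fun i =>
    min_le_min (hDstep i) le_rfl
  have hEn : E n = 0 := by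
    have h0 : E n = max (D n - t) 0 := rfl
    rw [h0, hDn]
    exact max_eq_right (by linarith)
  have hFn : F n = 0 := by
    have h0 : F n = min (D n) t := rfl
    rw [h0, hDn]
    exact min_eq_left ht0.le
  have hE0 : E 0 ≤ 1 - t := max_le (by linarith [(hD01 0).2]) (by linarith)
  have hF0 : F 0 ≤ t := min_le_right _ _
  have hP : ∀ i, i < n → ∑ j ∈ range (i+1), q j ≤ C ((i : ℝ) + 1) := by
    intro i hi
    have hsub : range (i+1) ⊆ range n := fun k hk => by
      rw [mem_range] at *; omega
    have h1 : ∑ j ∈ range (i+1), q j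
        = ∑ j ∈ univ.filter (fun j : Fin n => j ≤ (⟨i, hi⟩ : Fin n)), p j := by
      calc ∑ j ∈ range (i+1), q j
          = ∑ j ∈ range (i+1), (if j < i+1 then q j else 0) :=
            sum_congr rfl fun k hk => by rw [if_pos (mem_range.mp hk)]
        _ = ∑ j ∈ range n, (if j < i+1 then q j else 0) := by
            refine sum_subset hsub fun k _ hk2 => ?_
            rw [mem_range] at hk2
            exact if_neg hk2
        _ = ∑ j : Fin n, (if (j : ℕ) < i+1 then q (j : ℕ) else 0) :=
            (Fin.sum_univ_eq_sum_range (fun k => if k < i+1 then q k else 0) n).symm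
        _ = ∑ j : Fin n, (if j ≤ (⟨i, hi⟩ : Fin n) then p j else 0) := by
            refine sum_congr rfl fun j _ => ?_
            have hq' : q (j : ℕ) = p j := by simp [hq, j.isLt]
            rw [hq']
            congr 1
            simp [Fin.le_def, Nat.lt_succ_iff]
        _ = ∑ j ∈ univ.filter (fun j : Fin n => j ≤ (⟨i, hi⟩ : Fin n)), p j :=
            (sum_filter _ _).symm
    rw [h1]
    have := hpC ⟨i, hi⟩
    simpa using this
  have hmain : ∑ i, d i * p i = ∑ k ∈ range n, D k * q k := by
    rw [← Fin.sum_univ_eq_sum_range (fun k => D k * q k) n]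
    exact sum_congr rfl fun j _ => by simp [hD, hq, j.isLt]
  have habel := abel_sum D q n
  rw [hDn, zero_mul, sub_zero] at habel
  have hstep1 : ∑ k ∈ range n, (D k - D (k+1)) * (∑ j ∈ range (k+1), q j)
      ≤ ∑ k ∈ range n, (D k - D (k+1)) * C ((k : ℝ) + 1) :=
    sum_le_sum fun k hk =>
      mul_le_mul_of_nonneg_left (hP k (mem_range.mp hk)) (by linarith [hDstep k])
  have hsplit : ∑ k ∈ range n, (D k - D (k+1)) * C ((k : ℝ) + 1)
      = ∑ k ∈ range n, (E k - E (k+1)) * C ((k : ℝ) + 1)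
        + ∑ k ∈ range n, (F k - F (k+1)) * C ((k : ℝ) + 1) := by
    rw [← sum_add_distrib]
    refine sum_congr rfl fun k _ => ?_
    have h1 := hEF k
    have h2 := hEF (k+1)
    linear_combination (h2 - h1) * C ((k : ℝ) + 1)
  have hJ1 := jensen_step n E hEstep hEn (1-t) (by linarith) hE0 C hC hC0
  have hJ2 := jensen_step n F hFstep hFn t ht0 hF0 C hC hC0
  have hEx : ∑ k ∈ range n, E k = ∑ i, max (d i - t) 0 := by
    rw [← Fin.sum_univ_eq_sum_range (fun k => E k) n]
    exact sum_congr rfl fun j _ => by simp [hE, hD, j.isLt]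
  have hFx : ∑ k ∈ range n, F k = (∑ i, d i) - ∑ i, max (d i - t) 0 := by
    rw [← Fin.sum_univ_eq_sum_range (fun k => F k) n, ← sum_sub_distrib]
    refine sum_congr rfl fun j _ => ?_
    have : F (j : ℕ) = min (d j) t := by simp [hF, hD, j.isLt]
    rw [this]
    rcases le_total (d j) t with h | h
    · rw [min_eq_left h, max_eq_right (by linarith : d j - t ≤ 0)]
      ring
    · rw [min_eq_right h, max_eq_left (by linarith : (0:ℝ) ≤ d j - t)]
      ring
  rw [hEx] at hJ1
  rw [hFx] at hJ2
  calc ∑ i, d i * p i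
      = ∑ k ∈ range n, (D k - D (k+1)) * (∑ j ∈ range (k+1), q j) := by
        rw [hmain, habel]
    _ ≤ ∑ k ∈ range n, (D k - D (k+1)) * C ((k : ℝ) + 1) := hstep1
    _ = _ + _ := hsplit
    _ ≤ (1 - t) * C ((∑ i, max (d i - t) 0) / (1 - t))
        + t * C (((∑ i, d i) - ∑ i, max (d i - t) 0) / t) := add_le_add hJ1 hJ2
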